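/- For every n ≥ 1, the number of permutations of {1,...,n} avoiding both patterns 123 and 231 equals binom(n,2) + 1. -/
import Mathlib

def Contains {n k : ℕ} (σ : Equiv.Perm (Fin n)) (π : Equiv.Perm (Fin k)) : Prop :=
  ∃ f : Fin k → Fin n, StrictMono f ∧ ∀ a b : Fin k, π a < π b ↔ σ (f a) < σ (f b)

def Avoids {n k : ℕ} (σ : Equiv.Perm (Fin n)) (π : Equiv.Perm (Fin k)) : Prop :=
  ¬ Contains σ π

def Pprop (n : ℕ) (σ : Equiv.Perm (Fin n)) : Prop :=
  ∀ i j k : Fin n, i < j → j < k → σ i < σ j → σ i < σ k ∧ σ k < σ j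

def trip {n : ℕ} (i j k : Fin n) : Fin 3 → Fin n
  | ⟨0, _⟩ => i
  | ⟨1, _⟩ => j
  | ⟨_ + 2, _⟩ => k

lemma contains_of_triple {n : ℕ} (σ : Equiv.Perm (Fin n)) (π : Equiv.Perm (Fin 3))
    (i j k : Fin n) (hij : i < j) (hjk : j < k)
    (h : ∀ a b : Fin 3, π a < π b ↔ σ (trip i j k a) < σ (trip i j k b)) :
    Contains σ π := by
  refine ⟨trip i j k, ?_, h⟩
  intro a b hab
  have hik := hij.trans hjk
  fin_cases a <;> fin_cases b <;>
    first
      | exact absurd hab (by decide)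
      | exact hij
      | exact hjk
      | exact hik

lemma avoids_iff_Pprop {n : ℕ} (σ : Equiv.Perm (Fin n)) :
    (Avoids σ (1 : Equiv.Perm (Fin 3)) ∧ Avoids σ (finRotate 3)) ↔ Pprop n σ := by
  constructor
  · rintro ⟨h1, h2⟩ i j k hij hjk hsij
    by_contra hc
    push_neg at hc
    rcases lt_trichotomy (σ i) (σ k) with h | h | h
    · have hjk' : σ j ≤ σ k := hc h
      rcases lt_or_eq_of_le hjk' with h' | h'
      · refine h1 (contains_of_triple σ 1 i j k hij hjk ?_)
        intro a b
        fin_cases a <;> fin_cases b <;>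
          first
            | exact iff_of_false (by decide) (lt_irrefl _)
            | exact iff_of_true (by decide) hsij
            | exact iff_of_true (by decide) h'
            | exact iff_of_true (by decide) (hsij.trans h')
            | exact iff_of_false (by decide) (lt_asymm hsij)
            | exact iff_of_false (by decide) (lt_asymm h')
            | exact iff_of_false (by decide) (lt_asymm (hsij.trans h'))
      · exact absurd (σ.injective h') (Fin.ne_of_lt hjk)
    · exact absurd (σ.injective h) (Fin.ne_of_lt (hij.trans hjk))
    · refine h2 (contains_of_triple σ (finRotate 3) i j k hij hjk ?_)
      intro a b
      fin_cases a <;> fin_cases b <;>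
        first
          | exact iff_of_false (by decide) (lt_irrefl _)
          | exact iff_of_true (by decide) hsij
          | exact iff_of_true (by decide) h
          | exact iff_of_true (by decide) (h.trans hsij)
          | exact iff_of_false (by decide) (lt_asymm hsij)
          | exact iff_of_false (by decide) (lt_asymm h)
          | exact iff_of_false (by decide) (lt_asymm (h.trans hsij))
  · intro hP
    constructor
    · rintro ⟨f, hf, hcomp⟩
      have h01 : σ (f 0) < σ (f 1) := (hcomp 0 1).mp (by decide)
      have h12 : σ (f 1) < σ (f 2) := (hcomp 1 2).mp (by decide)
      have := hP (f 0) (f 1) (f 2) (hf (by decide)) (hf (by decide)) h01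
      exact lt_asymm h12 this.2
    · rintro ⟨f, hf, hcomp⟩
      have h01 : σ (f 0) < σ (f 1) := (hcomp 0 1).mp (by decide)
      have h20 : σ (f 2) < σ (f 0) := (hcomp 2 0).mp (by decide)
      have := hP (f 0) (f 1) (f 2) (hf (by decide)) (hf (by decide)) h01
      exact lt_asymm h20 this.1

/-- the candidate permutation family, as a function on ℕ.
For parameters `m ≤ j < n`: positions `< n-1-j` get `n-1-i` (big descending block),
positions in `[n-1-j, n-1-j+m]` get `n-1-j+m-i` (values `m,...,0`),
later positions get `n+m-i` (values `j,...,m+1`). -/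
def gfun (n j m i : ℕ) : ℕ :=
  if i < n - 1 - j then n - 1 - i
  else if i ≤ n - 1 - j + m then n - 1 - j + m - i
  else n + m - i

lemma gfun_lt {n j m i : ℕ} (hj : j < n) (hm : m ≤ j) (hi : i < n) : gfun n j m i < n := by
  unfold gfun; split_ifs <;> omega

lemma gfun_inj {n j m : ℕ} (hj : j < n) (hm : m ≤ j) {a b : ℕ} (ha : a < n) (hb : b < n)
    (hab : gfun n j m a = gfun n j m b) : a = b := by
  unfold gfun at hab; split_ifs at hab <;> omega

def gmap (n j m : ℕ) (i : Fin n) : Fin n :=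
  ⟨gfun n j m i.val % n, Nat.mod_lt _ (Nat.lt_of_le_of_lt (Nat.zero_le _) i.isLt)⟩

lemma gmap_val {n j m : ℕ} (hj : j < n) (hm : m ≤ j) (i : Fin n) :
    (gmap n j m i).val = gfun n j m i.val := by
  simp [gmap, Nat.mod_eq_of_lt (gfun_lt hj hm i.isLt)]

noncomputable def gperm (n j m : ℕ) (hj : j < n) (hm : m ≤ j) : Equiv.Perm (Fin n) :=
  Equiv.ofBijective (gmap n j m)
    (Finite.injective_iff_bijective.mp (fun a b hab => by
      apply Fin.ext
      exact gfun_inj hj hm a.isLt b.isLt (by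
        have ha := gmap_val hj hm a
        have hb := gmap_val hj hm b
        rw [hab] at ha; omega)))

lemma gperm_val {n j m : ℕ} (hj : j < n) (hm : m ≤ j) (i : Fin n) :
    ((gperm n j m hj hm) i).val = gfun n j m i.val := gmap_val hj hm i

lemma gperm_Pprop {n j m : ℕ} (hj : j < n) (hm : m ≤ j) : Pprop n (gperm n j m hj hm) := by
  intro a b c hab hbc hs
  rw [Fin.lt_def] at hab hbc
  rw [Fin.lt_def, gperm_val hj hm, gperm_val hj hm] at hs ⊢
  rw [Fin.lt_def, gperm_val hj hm, gperm_val hj hm]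
  constructor
  · have ha := a.isLt; have hb := b.isLt; have hc := c.isLt
    unfold gfun at hs ⊢; split_ifs at hs ⊢ <;> omega
  · have ha := a.isLt; have hb := b.isLt; have hc := c.isLt
    unfold gfun at hs ⊢; split_ifs at hs ⊢ <;> omega

lemma gperm_inj {n j1 m1 j2 m2 : ℕ} (hj1 : j1 < n) (hm1 : m1 < j1) (hj2 : j2 < n)
    (hm2 : m2 < j2) (h : gperm n j1 m1 hj1 (le_of_lt hm1) = gperm n j2 m2 hj2 (le_of_lt hm2)) :
    j1 = j2 ∧ m1 = m2 := by
  have hn : 0 < n := by omega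
  have key : ∀ i : ℕ, i < n → gfun n j1 m1 i = gfun n j2 m2 i := by
    intro i hi
    have := congrArg (fun σ : Equiv.Perm (Fin n) => (σ ⟨i, hi⟩).val) h
    simpa [gperm_val] using this
  have h1 := key (n - 1) (by omega)
  have hm : m1 = m2 := by
    unfold gfun at h1; split_ifs at h1 <;> omega
  have h2 := key (n - 1 - j1 + m1) (by omega)
  refine ⟨?_, hm⟩
  unfold gfun at h2; split_ifs at h2 <;> omega

lemma gperm_ne_rev {n j m : ℕ} (hj : j < n) (hm : m < j) (hn : 0 < n) :
    gperm n 0 0 (by omega) (le_refl 0) ≠ gperm n j m hj (le_of_lt hm) := by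
  intro h
  have := congrArg (fun σ : Equiv.Perm (Fin n) => (σ ⟨n - 1, by omega⟩).val) h
  simp only [gperm_val] at this
  unfold gfun at this; split_ifs at this <;> omega

lemma classification {n : ℕ} (hn : 0 < n) (σ : Equiv.Perm (Fin n)) (hP : Pprop n σ) :
    (∀ t (ht : t < n), (σ ⟨t, ht⟩).val = gfun n 0 0 t) ∨
    (∃ j m, ∃ (hj : j < n) (hm : m < j),
      ∀ t (ht : t < n), (σ ⟨t, ht⟩).val = gfun n j m t) := by
  set s : ℕ → ℕ := fun t => if h : t < n then (σ ⟨t, h⟩).val else 0 with hs_def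
  have hs_eq : ∀ t (ht : t < n), s t = (σ ⟨t, ht⟩).val := fun t ht => dif_pos ht
  have hs_lt : ∀ t, t < n → s t < n := fun t ht => by rw [hs_eq t ht]; exact (σ _).isLt
  have hs_inj : ∀ a, a < n → ∀ b, b < n → s a = s b → a = b := by
    intro a ha b hb hab
    rw [hs_eq a ha, hs_eq b hb] at hab
    have := σ.injective (Fin.ext hab)
    exact congrArg Fin.val this
  have hs_surj : ∀ v, v < n → ∃ t, t < n ∧ s t = v := by
    intro v hv
    refine ⟨(σ.symm ⟨v, hv⟩).val, (σ.symm ⟨v, hv⟩).isLt, ?_⟩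
    rw [hs_eq _ (σ.symm ⟨v, hv⟩).isLt]
    simp
  have hs_P : ∀ a b c : ℕ, a < b → b < c → c < n → s a < s b → s a < s c ∧ s c < s b := by
    intro a b c hab hbc hcn hsab
    have han : a < n := by omega
    have hbn : b < n := by omega
    rw [hs_eq a han, hs_eq b hbn] at hsab
    have := hP ⟨a, han⟩ ⟨b, hbn⟩ ⟨c, hcn⟩ hab hbc hsab
    rw [hs_eq a han, hs_eq b hbn, hs_eq c hcn]
    exact ⟨this.1, this.2⟩
  have hchain : ∀ b a, a ≤ b → b < n → (∀ t, a ≤ t → t < b → s (t + 1) < s t) →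
      s b + (b - a) ≤ s a := by
    intro b
    induction b with
    | zero =>
      intro a ha _ _
      have : a = 0 := by omega
      subst this; omega
    | succ b ih =>
      intro a ha hbn hd
      rcases Nat.lt_or_ge a (b + 1) with h | h
      · have h1 : s (b + 1) < s b := hd b (by omega) (by omega)
        have h2 := ih a (by omega) (by omega) (fun t ht1 ht2 => hd t ht1 (by omega))
        omega
      · have : a = b + 1 := by omega
        subst this; omega
  by_cases hall : ∀ t, t + 1 < n → s (t + 1) < s t
  · left
    intro t ht
    have h1 : s t + t ≤ s 0 := hchain t 0 (by omega) ht (fun u hu1 hu2 => hall u (by omega))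
    have h2 : s (n - 1) + (n - 1 - t) ≤ s t :=
      hchain (n - 1) t (by omega) (by omega) (fun u hu1 hu2 => hall u (by omega))
    have h0 : s 0 < n := hs_lt 0 hn
    have hst : s t = n - 1 - t := by omega
    rw [← hs_eq t ht, hst]
    unfold gfun; split_ifs <;> omega
  · right
    push_neg at hall
    obtain ⟨p, hpn, hple⟩ := hall
    have hasc : s p < s (p + 1) := by
      rcases Nat.lt_or_ge (s p) (s (p + 1)) with h | h
      · exact h
      · have : s p = s (p + 1) := by omega
        have := hs_inj p (by omega) (p + 1) (by omega) this
        omega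
    have two_asc : ∀ a b, a < b → b + 1 < n → s a < s (a + 1) → s b < s (b + 1) → False := by
      intro a b hab hbn ha hb
      have hsab : s a < s b := by
        rcases Nat.lt_or_ge (a + 1) b with h | h
        · exact (hs_P a (a + 1) b (by omega) h (by omega) ha).1
        · have : a + 1 = b := by omega
          subst this; exact ha
      have := hs_P a b (b + 1) hab (by omega) (by omega) hsab
      omega
    have huniq : ∀ t, t + 1 < n → t ≠ p → s (t + 1) < s t := by
      intro t ht hne
      by_contra hle
      push_neg at hle
      have hasc' : s t < s (t + 1) := by
        rcases Nat.lt_or_ge (s t) (s (t + 1)) with h | h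
        · exact h
        · have : s t = s (t + 1) := by omega
          have := hs_inj t (by omega) (t + 1) (by omega) this
          omega
      rcases Nat.lt_or_ge t p with h | h
      · exact two_asc t p h hpn hasc' hasc
      · exact two_asc p t (by omega) (by omega) hasc hasc'
    have chain01 : ∀ i i', i ≤ i' → i' ≤ p → s i' + (i' - i) ≤ s i := by
      intro i i' h1 h2
      exact hchain i' i h1 (by omega) (fun t ht1 ht2 => huniq t (by omega) (by omega))
    have chain2 : ∀ k k', p + 1 ≤ k → k ≤ k' → k' < n → s k' + (k' - k) ≤ s k := by
      intro k k' h1 h2 h3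
      exact hchain k' k h2 h3 (fun t ht1 ht2 => huniq t (by omega) (by omega))
    -- s p = 0
    have hsp : s p = 0 := by
      by_contra h0
      obtain ⟨t0, ht0n, ht0⟩ := hs_surj 0 hn
      have hne : t0 ≠ p := fun he => h0 (he ▸ ht0)
      rcases Nat.lt_or_ge t0 p with h | h
      · have := hs_P t0 p (p + 1) h (by omega) (by omega) (by omega)
        omega
      · rcases Nat.lt_or_ge (p + 1) t0 with h' | h'
        · have := hs_P p (p + 1) t0 (by omega) h' (by omega) hasc
          omega
        · have : t0 = p + 1 := by omega
          subst this; omega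
    set q := p + 1 with hq_def
    set j := s q with hj_def
    have hj1 : 1 ≤ j := by omega
    have hjn : j < n := hs_lt q hpn
    have hsn1_pos : 0 < s (n - 1) := by
      rcases Nat.eq_zero_or_pos (s (n - 1)) with h | h
      · have := hs_inj (n - 1) (by omega) p (by omega) (by omega)
        omega
      · exact h
    set m := s (n - 1) - 1 with hm_def
    have hsn1_le : s (n - 1) ≤ j := by
      have := chain2 q (n - 1) (by omega) (by omega) (by omega)
      omega
    have F3 : ∀ k, q < k → k < n → 0 < s k ∧ s k < j := by
      intro k h1 h2
      have := hs_P p q k (by omega) h1 h2 (by omega)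
      omega
    have F4 : ∀ i, i < p → s i < j → ∀ k, q ≤ k → k < n → s i < s k := by
      intro i hi hij k hk1 hk2
      rcases Nat.lt_or_ge q k with h | h
      · exact (hs_P i q k (by omega) h hk2 (by rwa [← hj_def])).1
      · have : k = q := by omega
        rw [this]; omega
    have hex : ∃ i, s i < j := ⟨p, by omega⟩
    obtain ⟨c, hc1, hc2⟩ : ∃ c, s c < j ∧ ∀ i, i < c → j ≤ s i :=
      ⟨Nat.find hex, Nat.find_spec hex, fun i hi => le_of_not_gt (Nat.find_min hex hi)⟩
    have hcp : c ≤ p := by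
      by_contra h
      have := hc2 p (by omega)
      omega
    have hBlt : ∀ i, c ≤ i → i ≤ p → s i < j := by
      intro i h1 h2
      have := chain01 c i h1 h2
      omega
    have hBm : ∀ i, c ≤ i → i ≤ p → s i < s (n - 1) := by
      intro i h1 h2
      rcases Nat.lt_or_ge i p with h | h
      · exact F4 i h (hBlt i h1 h2) (n - 1) (by omega) (by omega)
      · have : i = p := by omega
        subst this; omega
    -- block1 values are > j (strictly)
    have hblk1_gt : ∀ i, i < c → j < s i := by
      intro i hi
      have h1 := hc2 i hi
      rcases Nat.lt_or_ge j (s i) with h | h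
      · exact h
      · have : s i = j := by omega
        have := hs_inj i (by omega) q (by omega) (by rw [← hj_def]; exact this)
        omega
    -- pigeonhole 1 : m ≤ p - c
    have hpig1 : m + 1 ≤ p - c + 1 := by
      have hsub : Finset.Icc 0 m ⊆ Finset.image s (Finset.Icc c p) := by
        intro v hv
        rw [Finset.mem_Icc] at hv
        obtain ⟨t, htn, hts⟩ := hs_surj v (by omega)
        refine Finset.mem_image.mpr ⟨t, Finset.mem_Icc.mpr ⟨?_, ?_⟩, hts⟩
        · by_contra h
          have := hblk1_gt t (by omega)
          omega
        · by_contra h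
          push_neg at h
          rcases Nat.lt_or_ge t (n - 1) with h' | h'
          · have := chain2 t (n - 1) (by omega) (by omega) (by omega)
            omega
          · have : t = n - 1 := by omega
            subst this; omega
      calc m + 1 = (Finset.Icc 0 m).card := by rw [Nat.card_Icc]; omega
        _ ≤ (Finset.image s (Finset.Icc c p)).card := Finset.card_le_card hsub
        _ ≤ (Finset.Icc c p).card := Finset.card_image_le
        _ = p - c + 1 := by rw [Nat.card_Icc]; omega
    have hsc_ge : p - c ≤ s c := by
      have := chain01 c p (by omega) (by omega)
      omega
    have hsc_le : s c ≤ s (n - 1) - 1 := by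
      have := hBm c (by omega) hcp
      omega
    have hsc : s c = m ∧ p - c = m := by omega
    -- block 2 formula
    have hblk2 : ∀ i, c ≤ i → i ≤ p → s i = p - i := by
      intro i h1 h2
      have hl := chain01 i p h2 (by omega)
      have hu := chain01 c i h1 h2
      omega
    -- pigeonhole 2 : j - m ≤ n - q
    have hpig2 : j - m ≤ n - q := by
      have hsub : Finset.Icc (m + 1) j ⊆ Finset.image s (Finset.Icc q (n - 1)) := by
        intro v hv
        rw [Finset.mem_Icc] at hv
        obtain ⟨t, htn, hts⟩ := hs_surj v (by omega)
        refine Finset.mem_image.mpr ⟨t, Finset.mem_Icc.mpr ⟨?_, by omega⟩, hts⟩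
        by_contra h
        push_neg at h
        rcases Nat.lt_or_ge t c with h' | h'
        · have := hblk1_gt t h'
          omega
        · have := hblk2 t h' (by omega)
          omega
      calc j - m = (Finset.Icc (m + 1) j).card := by rw [Nat.card_Icc]; omega
        _ ≤ (Finset.image s (Finset.Icc q (n - 1))).card := Finset.card_le_card hsub
        _ ≤ (Finset.Icc q (n - 1)).card := Finset.card_image_le
        _ = n - q := by rw [Nat.card_Icc]; omega
    have hjq : j = n + m - q := by
      have := chain2 q (n - 1) (by omega) (by omega) (by omega)
      omega
    -- block 3 formula
    have hblk3 : ∀ k, q ≤ k → k < n → s k = n + m - k := by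
      intro k h1 h2
      have hl := chain2 k (n - 1) h1 (by omega) (by omega)
      have hu := chain2 q k (by omega) h1 h2
      omega
    -- block 1 formula
    have hblk1 : ∀ i, i < c → s i = n - 1 - i := by
      intro i hi
      have hu : s i + i ≤ s 0 := chain01 0 i (by omega) (by omega)
      have h0 : s 0 < n := hs_lt 0 hn
      have hl : s (c - 1) + (c - 1 - i) ≤ s i := chain01 i (c - 1) (by omega) (by omega)
      have hgt := hblk1_gt (c - 1) (by omega)
      omega
    refine ⟨j, m, hjn, by omega, ?_⟩
    intro t ht
    rw [← hs_eq t ht]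
    have hcj : c = n - 1 - j := by omega
    unfold gfun
    split_ifs with h1 h2
    · exact hblk1 t (by omega)
    · rw [hblk2 t (by omega) (by omega)]; omega
    · exact hblk3 t (by omega) ht

noncomputable def Phi (n : ℕ) (hn : 0 < n) : Option (Σ j : Fin n, Fin j.val) → Equiv.Perm (Fin n)
  | none => gperm n 0 0 hn (le_refl 0)
  | some ⟨j, m⟩ => gperm n j.val m.val j.isLt (le_of_lt m.isLt)

lemma Phi_Pprop (n : ℕ) (hn : 0 < n) (x : Option (Σ j : Fin n, Fin j.val)) :
    Pprop n (Phi n hn x) := by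
  cases x with
  | none => exact gperm_Pprop hn (le_refl 0)
  | some a => obtain ⟨j, m⟩ := a; exact gperm_Pprop j.isLt (le_of_lt m.isLt)

/-- The number of permutations of size `n ≥ 1` avoiding both 123 and 231 is `n.choose 2 + 1`. -/
theorem card_avoid_123_231 (n : ℕ) (hn : 1 ≤ n) :
    Nat.card {σ : Equiv.Perm (Fin n) //
      Avoids σ (1 : Equiv.Perm (Fin 3)) ∧ Avoids σ (finRotate 3)} = n.choose 2 + 1 := by
  have hn0 : 0 < n := hn
  have e : Option (Σ j : Fin n, Fin j.val) ≃ {σ : Equiv.Perm (Fin n) //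
      Avoids σ (1 : Equiv.Perm (Fin 3)) ∧ Avoids σ (finRotate 3)} := by
    refine Equiv.ofBijective
      (fun x => ⟨Phi n hn0 x, (avoids_iff_Pprop _).mpr (Phi_Pprop n hn0 x)⟩) ⟨?_, ?_⟩
    · intro x y hxy
      have h : Phi n hn0 x = Phi n hn0 y := congrArg Subtype.val hxy
      cases x with
      | none =>
        cases y with
        | none => rfl
        | some a =>
          obtain ⟨j2, m2⟩ := a
          exact absurd h (gperm_ne_rev j2.isLt m2.isLt hn0)
      | some a =>
        cases y with
        | none =>
          obtain ⟨j1, m1⟩ := a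
          exact absurd h.symm (gperm_ne_rev j1.isLt m1.isLt hn0)
        | some b =>
          obtain ⟨j1, m1⟩ := a
          obtain ⟨j2, m2⟩ := b
          obtain ⟨hj, hm⟩ := gperm_inj j1.isLt m1.isLt j2.isLt m2.isLt h
          have hj' : j1 = j2 := Fin.ext hj
          subst hj'
          have hm' : m1 = m2 := Fin.ext hm
          subst hm'
          rfl
    · rintro ⟨σ, hσ⟩
      have hP := (avoids_iff_Pprop σ).mp hσ
      rcases classification hn0 σ hP with h | ⟨j, m, hj, hm, h⟩
      · refine ⟨none, Subtype.ext (Equiv.ext fun i => Fin.ext ?_)⟩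
        show (gperm n 0 0 hn0 (le_refl 0) i).val = (σ i).val
        rw [gperm_val]
        have := h i.val i.isLt
        simpa using this.symm
      · refine ⟨some ⟨⟨j, hj⟩, ⟨m, hm⟩⟩, Subtype.ext (Equiv.ext fun i => Fin.ext ?_)⟩
        show (gperm n j m hj (le_of_lt hm) i).val = (σ i).val
        rw [gperm_val]
        have := h i.val i.isLt
        simpa using this.symm
  rw [← Nat.card_congr e]
  rw [Nat.card_eq_fintype_card]
  rw [Fintype.card_option, Fintype.card_sigma]
  simp only [Fintype.card_fin]
  have h1 : (∑ j : Fin n, j.val) = ∑ i ∈ Finset.range n, i :=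
    Fin.sum_univ_eq_sum_range (fun i => i) n
  have h2 : (∑ i ∈ Finset.range n, i) * 2 = n * (n - 1) := Finset.sum_range_id_mul_two n
  have h3 : n.choose 2 = n * (n - 1) / 2 := Nat.choose_two_right n
  omega
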